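/- Let k be a commutative ring, G a group, A a k-algebra, and 𝒜 : G → Submodule k A a G-grading of A. Then the map ρ_𝒜 : A → A ⊗[k] MonoidAlgebra k G defined by ρ_𝒜(a) = Σ_{g ∈ G} (the 𝒜 g-component of a) ⊗ₜ single g 1 is a k-algebra homomorphism, and it is counital and coassociative; i.e. ρ_𝒜 is a comodule-algebra structure on A over MonoidAlgebra k G. -/

import Mathlib

open TensorProduct

noncomputable section

variable (k G A : Type*) [CommRing k] [Group G] [DecidableEq G] [Ring A] [Algebra k A]

/-- The counit of the standard bialgebra structure on the group algebra `k[G]`: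
it is the `k`-linear map with `counit (single g r) = r`; in particular
`counit (single g 1) = 1`, so that every group element is grouplike. -/
def gaCounit : MonoidAlgebra k G →ₗ[k] k :=
  (Finsupp.lsum k fun _ => LinearMap.id) ∘ₗ (MonoidAlgebra.coeffLinearEquiv k).toLinearMap

/-- The comultiplication of the standard bialgebra structure on the group algebra `k[G]`:
it is the `k`-linear map with `comul (single g r) = r • (single g 1 ⊗ₜ single g 1)`;
in particular `comul (single g 1) = single g 1 ⊗ₜ single g 1`, so that every group
element is grouplike. -/
def gaComul : MonoidAlgebra k G →ₗ[k] MonoidAlgebra k G ⊗[k] MonoidAlgebra k G :=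
  (Finsupp.lsum k fun g =>
    LinearMap.toSpanSingleton k _ (MonoidAlgebra.single g (1 : k) ⊗ₜ[k] MonoidAlgebra.single g (1 : k)))
      ∘ₗ (MonoidAlgebra.coeffLinearEquiv k).toLinearMap

/-- A `G`-grading of the `k`-algebra `A`: a family `𝒜 : G → Submodule k A` forming an
internal direct sum decomposition of `A` with `1 ∈ 𝒜 1` and `𝒜 g * 𝒜 h ⊆ 𝒜 (g * h)`. -/
structure GroupGrading where
  grading : G → Submodule k A
  decomposition : DirectSum.Decomposition grading
  one_mem : (1 : A) ∈ grading 1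
  mul_mem : ∀ {g h : G} {x y : A}, x ∈ grading g → y ∈ grading h → x * y ∈ grading (g * h)

/-- The map `ρ_𝒜 : A → A ⊗[k] k[G]` associated to a grading `𝒜`, defined by
`ρ_𝒜 a = Σ_{g ∈ G} (the 𝒜 g-component of a) ⊗ₜ single g 1`. -/
def rhoOf (𝒜 : GroupGrading k G A) : A → A ⊗[k] MonoidAlgebra k G :=
  letI := 𝒜.decomposition
  fun a => ∑ᶠ g : G, ((DirectSum.decompose 𝒜.grading a) g : A) ⊗ₜ[k] MonoidAlgebra.single g 1

end

noncomputable section AuxRho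

open scoped DirectSum

variable {k G A : Type*} [CommRing k] [Group G] [DecidableEq G] [Ring A] [Algebra k A]
  (𝒜 : GroupGrading k G A)

lemma gaCounit_single (g : G) : gaCounit k G (MonoidAlgebra.single g (1 : k)) = 1 := by
  rw [gaCounit, LinearMap.comp_apply]
  erw [Finsupp.lsum_single]
  rfl

lemma gaComul_single (g : G) : gaComul k G (MonoidAlgebra.single g (1 : k))
    = MonoidAlgebra.single g 1 ⊗ₜ[k] MonoidAlgebra.single g 1 := by
  rw [gaComul, LinearMap.comp_apply]
  erw [Finsupp.lsum_single]
  rw [LinearMap.toSpanSingleton_apply, one_smul]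

/-- The grading reindexed by `Additive G`. -/
def addGrading : Additive G → Submodule k A := fun g => 𝒜.grading g.toMul

instance : SetLike.GradedMonoid (addGrading 𝒜) where
  one_mem := 𝒜.one_mem
  mul_mem _ _ _ _ hx hy := 𝒜.mul_mem hx hy

def addDecomposition : DirectSum.Decomposition (addGrading 𝒜) := 𝒜.decomposition

/-- The algebra hom out of the direct sum sending a homogeneous `x` of degree `g` to
`x ⊗ₜ single g 1`. -/
def rhoToAlg : (⨁ g : Additive G, addGrading 𝒜 g) →ₐ[k] A ⊗[k] MonoidAlgebra k G :=
  DirectSum.toAlgebra k _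
    (fun g => (TensorProduct.mk k A (MonoidAlgebra k G)).flip (MonoidAlgebra.single g.toMul 1)
        ∘ₗ (addGrading 𝒜 g).subtype)
    (by
      show (1 : A) ⊗ₜ[k] (MonoidAlgebra.single (1 : G) (1 : k)) = 1
      rw [← MonoidAlgebra.one_def, ← Algebra.TensorProduct.one_def])
    (fun {i j} ai aj => by
      simp only [LinearMap.comp_apply, Submodule.subtype_apply, LinearMap.flip_apply,
        TensorProduct.mk_apply, Algebra.TensorProduct.tmul_mul_tmul,
        MonoidAlgebra.single_mul_single, one_mul]
      rfl)

/-- `ρ_𝒜` as an algebra homomorphism. -/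
def rhoAlg : A →ₐ[k] A ⊗[k] MonoidAlgebra k G :=
  letI := addDecomposition 𝒜
  letI : GradedAlgebra (addGrading 𝒜) :=
    { (inferInstance : SetLike.GradedMonoid (addGrading 𝒜)), addDecomposition 𝒜 with }
  (rhoToAlg 𝒜).comp (DirectSum.decomposeAlgEquiv (addGrading 𝒜)).toAlgHom

lemma rhoAlg_coe {g : G} {x : A} (hx : x ∈ 𝒜.grading g) :
    rhoAlg 𝒜 x = x ⊗ₜ[k] MonoidAlgebra.single g 1 := by
  letI := addDecomposition 𝒜
  have h : DirectSum.decompose (addGrading 𝒜) x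
      = DirectSum.of _ (Additive.ofMul g) (⟨x, hx⟩ : addGrading 𝒜 (Additive.ofMul g)) :=
    DirectSum.decompose_coe (addGrading 𝒜) (⟨x, hx⟩ : addGrading 𝒜 (Additive.ofMul g))
  show rhoToAlg 𝒜 (DirectSum.decompose (addGrading 𝒜) x) = _
  rw [h]
  simp only [rhoToAlg, DirectSum.toAlgebra_apply, DirectSum.toSemiring_of]
  erw [DirectSum.toSemiring_of]
  rfl

lemma rhoAlg_apply (a : A) : rhoAlg 𝒜 a = rhoOf k G A 𝒜 a := by
  classical
  letI := 𝒜.decomposition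
  induction a using DirectSum.Decomposition.inductionOn 𝒜.grading with
  | zero =>
    rw [map_zero, rhoOf]
    refine Eq.symm (finsum_eq_zero_of_forall_eq_zero fun g => ?_)
    simp
  | @homogeneous g x =>
    rw [rhoAlg_coe 𝒜 x.2, rhoOf]
    rw [finsum_eq_single _ g (fun b hb => by
      rw [DirectSum.decompose_coe, DirectSum.of_eq_of_ne _ _ _ hb]
      simp)]
    rw [DirectSum.decompose_coe, DirectSum.of_eq_same]
  | add a b ha hb =>
    have hfin : ∀ c : A, (Function.support fun g : G =>
        ((DirectSum.decompose 𝒜.grading c) g : A) ⊗ₜ[k] MonoidAlgebra.single g (1 : k)).Finite :=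
      fun c => Set.Finite.subset (DirectSum.decompose 𝒜.grading c).support.finite_toSet
        (fun g hg => by
          simp only [Function.mem_support, ne_eq] at hg
          by_contra h
          simp only [DFinsupp.mem_support_toFun, ne_eq, not_not, Finset.mem_coe] at h
          exact hg (by rw [h]; simp))
    rw [map_add, ha, hb]
    simp only [rhoOf]
    rw [DirectSum.decompose_add]
    simp only [DirectSum.add_apply, Submodule.coe_add, TensorProduct.add_tmul]
    rw [finsum_add_distrib (hfin a) (hfin b)]

lemma rhoAlg_counital :
    TensorProduct.map LinearMap.id (gaCounit k G) ∘ₗ (rhoAlg 𝒜).toLinearMap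
      = (TensorProduct.rid k A).symm.toLinearMap := by
  letI := 𝒜.decomposition
  ext a
  induction a using DirectSum.Decomposition.inductionOn 𝒜.grading with
  | zero => rw [map_zero, map_zero]
  | @homogeneous g x =>
    simp only [LinearMap.comp_apply, AlgHom.toLinearMap_apply, LinearEquiv.coe_coe,
      TensorProduct.rid_symm_apply]
    rw [rhoAlg_coe 𝒜 x.2, TensorProduct.map_tmul, gaCounit_single, LinearMap.id_apply]
  | add a b ha hb => rw [map_add, map_add, ha, hb]

lemma rhoAlg_coassoc :
    TensorProduct.map (rhoAlg 𝒜).toLinearMap LinearMap.id ∘ₗ (rhoAlg 𝒜).toLinearMap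
      = (TensorProduct.assoc k A (MonoidAlgebra k G) (MonoidAlgebra k G)).symm.toLinearMap
          ∘ₗ TensorProduct.map LinearMap.id (gaComul k G) ∘ₗ (rhoAlg 𝒜).toLinearMap := by
  letI := 𝒜.decomposition
  ext a
  induction a using DirectSum.Decomposition.inductionOn 𝒜.grading with
  | zero => rw [map_zero, map_zero]
  | @homogeneous g x =>
    simp only [LinearMap.comp_apply, AlgHom.toLinearMap_apply, LinearEquiv.coe_coe]
    rw [rhoAlg_coe 𝒜 x.2]
    simp only [TensorProduct.map_tmul, AlgHom.toLinearMap_apply, LinearMap.id_apply]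
    rw [rhoAlg_coe 𝒜 x.2]
    rw [gaComul_single, TensorProduct.assoc_symm_tmul]
  | add a b ha hb => rw [map_add, map_add, ha, hb]

end AuxRho



/-- For a `G`-grading `𝒜` of `A`, the map `ρ_𝒜` is a `k`-algebra homomorphism which is
counital and coassociative, i.e. a comodule-algebra structure on `A` over `k[G]`. -/
theorem rho_isComoduleAlgebra
    (k G A : Type*) [CommRing k] [Group G] [DecidableEq G] [Ring A] [Algebra k A]
    (𝒜 : GroupGrading k G A) :
    ∃ ρ : A →ₐ[k] A ⊗[k] MonoidAlgebra k G,
      (⇑ρ = rhoOf k G A 𝒜) ∧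
      (TensorProduct.map LinearMap.id (gaCounit k G) ∘ₗ ρ.toLinearMap
        = (TensorProduct.rid k A).symm.toLinearMap) ∧
      (TensorProduct.map ρ.toLinearMap LinearMap.id ∘ₗ ρ.toLinearMap
        = (TensorProduct.assoc k A (MonoidAlgebra k G) (MonoidAlgebra k G)).symm.toLinearMap
            ∘ₗ TensorProduct.map LinearMap.id (gaComul k G) ∘ₗ ρ.toLinearMap) := by
  exact ⟨rhoAlg 𝒜, funext (rhoAlg_apply 𝒜), rhoAlg_counital 𝒜, rhoAlg_coassoc 𝒜⟩
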